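/- Let ω₀, ω₁, ω₂ ≥ 0, let φ be uniformly distributed on [0, 2π), and let G₁, G₂, G₃ be standard circularly-symmetric complex Gaussian random variables, with φ, G₁, G₂, G₃ mutually independent. Then the random variables |ω₀ e^{iφ} + ω₁ G₁ + ω₂ G₂ G₃| and |ω₀ e^{iφ} + ω₁ G₁ + ω₂ G₂ |G₃|| are identically distributed (so the SOSF signal can be generated from only two complex Gaussian variates and the nonnegative variate |G₃|). -/

import Mathlib

open MeasureTheory ProbabilityTheory Real

/-- **SOSF signal generation from two complex Gaussians.** Let `ω₀, ω₁, ω₂ ≥ 0`, let `φ` be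
uniform on `[0, 2π)`, and let `Gᵢ = Xᵢ + iYᵢ` (for `i = 0, 1, 2`) be standard
circularly-symmetric complex Gaussians (`Xᵢ, Yᵢ` independent real Gaussians of mean `0` and
variance `1/2`), with `φ, X₀, Y₀, X₁, Y₁, X₂, Y₂` mutually independent. Then
`|ω₀ e^{iφ} + ω₁G₀ + ω₂G₁G₂|` and `|ω₀ e^{iφ} + ω₁G₀ + ω₂G₁|G₂||` are identically
distributed. -/

noncomputable def sosfPdf : ℂ → ENNReal :=
  fun z => gaussianPDF 0 (1/2) z.re * gaussianPDF 0 (1/2) z.im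

lemma sosfPdf_measurable : Measurable sosfPdf :=
  ((measurable_gaussianPDF 0 (1/2)).comp Complex.measurable_re).mul
    ((measurable_gaussianPDF 0 (1/2)).comp Complex.measurable_im)

lemma sosfPdf_apply (z : ℂ) :
    sosfPdf z = ENNReal.ofReal ((√π)⁻¹ * (√π)⁻¹ * rexp (-(Complex.normSq z))) := by
  have h1 : ∀ x : ℝ, gaussianPDFReal 0 (1/2) x = (√π)⁻¹ * rexp (-(x^2)) := by
    intro x
    rw [gaussianPDFReal]
    push_cast
    norm_num
    field_simp
  simp only [sosfPdf, gaussianPDF, h1]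
  rw [← ENNReal.ofReal_mul (by positivity)]
  congr 1
  rw [Complex.normSq_apply, mul_mul_mul_comm, ← Real.exp_add]
  ring_nf

lemma sosf_map_equiv_withDensity {α β : Type*} [MeasurableSpace α] [MeasurableSpace β]
    (e : α ≃ᵐ β) (μ : Measure α) {f : β → ENNReal} (hf : Measurable f) :
    (μ.withDensity (fun a => f (e a))).map e = (μ.map e).withDensity f := by
  ext s hs
  rw [Measure.map_apply e.measurable hs, withDensity_apply _ hs,
    withDensity_apply _ (e.measurable hs), setLIntegral_map hs hf e.measurable]

noncomputable def sosfGaussC : Measure ℂ := (volume : Measure ℂ).withDensity sosfPdf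

lemma sosf_rot {u : ℂ} (hu : ‖u‖ = 1) :
    sosfGaussC.map (fun z => z * u) = sosfGaussC := by
  have hmem : u ∈ Metric.sphere (0 : ℂ) 1 := by
    simpa [mem_sphere_zero_iff_norm] using hu
  set a : Circle := ⟨u, hmem⟩ with ha
  have hfun : (fun z : ℂ => z * u) = ⇑(rotation a).toHomeomorph.toMeasurableEquiv := by
    funext z
    simp only [Homeomorph.toMeasurableEquiv_coe, LinearIsometryEquiv.coe_toHomeomorph, rotation_apply]
    rw [mul_comm]
  have hinv : (fun z => sosfPdf ((rotation a).toHomeomorph.toMeasurableEquiv z)) = sosfPdf := by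
    funext z
    simp only [Homeomorph.toMeasurableEquiv_coe, LinearIsometryEquiv.coe_toHomeomorph, rotation_apply, sosfPdf_apply,
      Complex.normSq_mul]
    have : Complex.normSq (a : ℂ) = 1 := by
      rw [Complex.normSq_eq_norm_sq]
      show ‖u‖ ^ 2 = 1
      rw [hu]; norm_num
    rw [this, one_mul]
  have key := sosf_map_equiv_withDensity (rotation a).toHomeomorph.toMeasurableEquiv (volume : Measure ℂ)
    sosfPdf_measurable
  rw [hinv] at key
  rw [sosfGaussC, hfun, key]
  have : Measure.map (⇑(rotation a).toHomeomorph.toMeasurableEquiv) (volume : Measure ℂ) = volume := by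
    rw [Homeomorph.toMeasurableEquiv_coe, LinearIsometryEquiv.coe_toHomeomorph]
    exact (rotation a).measurePreserving.map_eq
  rw [this]

lemma sosf_gauss_prod :
    (gaussianReal 0 (1/2)).prod (gaussianReal 0 (1/2))
      = (volume : Measure (ℝ × ℝ)).withDensity
          (fun p => gaussianPDF 0 (1/2) p.1 * gaussianPDF 0 (1/2) p.2) := by
  refine Measure.prod_eq fun s t hs ht => ?_
  rw [withDensity_apply _ (hs.prod ht), Measure.volume_eq_prod, ← Measure.prod_restrict,
    lintegral_prod_mul (measurable_gaussianPDF 0 (1/2)).aemeasurable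
      (measurable_gaussianPDF 0 (1/2)).aemeasurable,
    gaussianReal_of_var_ne_zero 0 (by norm_num), withDensity_apply _ hs, withDensity_apply _ ht]

lemma sosf_gaussC_eq_map :
    ((gaussianReal 0 (1/2)).prod (gaussianReal 0 (1/2))).map
      (fun p : ℝ × ℝ => (p.1 : ℂ) + (p.2 : ℂ) * Complex.I) = sosfGaussC := by
  have he : (fun p : ℝ × ℝ => (p.1 : ℂ) + (p.2 : ℂ) * Complex.I)
      = ⇑Complex.measurableEquivRealProd.symm := by
    funext p
    rw [Complex.measurableEquivRealProd_symm_apply]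
    exact Complex.ext (by simp) (by simp)
  have hd : (fun p : ℝ × ℝ => gaussianPDF 0 (1/2) p.1 * gaussianPDF 0 (1/2) p.2)
      = fun p => sosfPdf (Complex.measurableEquivRealProd.symm p) := by
    funext p
    simp [sosfPdf, Complex.measurableEquivRealProd_symm_apply]
  have key := sosf_map_equiv_withDensity Complex.measurableEquivRealProd.symm
    (volume : Measure (ℝ × ℝ)) sosfPdf_measurable
  rw [he, sosf_gauss_prod, hd, key,
    (Complex.volume_preserving_equiv_real_prod.symm _).map_eq, sosfGaussC]

noncomputable def sosfU : ℂ → ℂ := fun c => if c = 0 then 1 else (‖c‖ : ℂ) / c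

lemma sosfU_abs (c : ℂ) : ‖sosfU c‖ = 1 := by
  rw [sosfU]
  split_ifs with h
  · simp
  · rw [norm_div, Complex.norm_real, norm_norm, div_self (norm_ne_zero_iff.mpr h)]

lemma sosfU_spec (c b : ℂ) : b * sosfU c * c = b * (‖c‖ : ℂ) := by
  rw [sosfU]
  split_ifs with h
  · simp [h]
  · field_simp

lemma sosfU_measurable : Measurable sosfU := by
  refine Measurable.ite (measurableSet_eq_fun measurable_id measurable_const) measurable_const ?_
  exact (Complex.measurable_ofReal.comp continuous_norm.measurable).div measurable_id

theorem sosf_two_gaussians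
    {Ω : Type*} [MeasurableSpace Ω] (P : Measure Ω) [IsProbabilityMeasure P]
    (ω₀ ω₁ ω₂ : ℝ) (h₀ : 0 ≤ ω₀) (h₁ : 0 ≤ ω₁) (h₂ : 0 ≤ ω₂)
    (φ : Ω → ℝ) (X Y : Fin 3 → Ω → ℝ)
    (hφm : Measurable φ) (hXm : ∀ i, Measurable (X i)) (hYm : ∀ i, Measurable (Y i))
    (hφlaw : P.map φ
      = (ENNReal.ofReal (2 * Real.pi))⁻¹ • volume.restrict (Set.Ico 0 (2 * Real.pi)))
    (hXlaw : ∀ i, P.map (X i) = gaussianReal 0 (1 / 2))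
    (hYlaw : ∀ i, P.map (Y i) = gaussianReal 0 (1 / 2))
    (hindep : iIndepFun
      ![φ, X 0, Y 0, X 1, Y 1, X 2, Y 2] P)
    (G : Fin 3 → Ω → ℂ) (hG : ∀ i ω, G i ω = (X i ω : ℂ) + (Y i ω : ℂ) * Complex.I) :
    P.map (fun ω => ‖
        ((ω₀ : ℂ) * Complex.exp ((φ ω : ℂ) * Complex.I) + (ω₁ : ℂ) * G 0 ω +
          (ω₂ : ℂ) * (G 1 ω * G 2 ω))‖)
      = P.map (fun ω => ‖
        ((ω₀ : ℂ) * Complex.exp ((φ ω : ℂ) * Complex.I) + (ω₁ : ℂ) * G 0 ω +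
          (ω₂ : ℂ) * (G 1 ω * (‖G 2 ω‖ : ℂ)))‖) := by
  classical
  set f : Fin 7 → Ω → ℝ := ![φ, X 0, Y 0, X 1, Y 1, X 2, Y 2] with hf
  have hfm : ∀ i, Measurable (f i) := by
    intro i
    fin_cases i
    · exact hφm
    · exact hXm 0
    · exact hYm 0
    · exact hXm 1
    · exact hYm 1
    · exact hXm 2
    · exact hYm 2
  -- the complex-building map
  set m : ℝ × ℝ → ℂ := fun p => (p.1 : ℂ) + (p.2 : ℂ) * Complex.I with hmdef
  have hm : Measurable m :=
    (Complex.measurable_ofReal.comp measurable_fst).add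
      ((Complex.measurable_ofReal.comp measurable_snd).mul_const Complex.I)
  -- the grouped random variables
  set A : Ω → ℝ × ℂ := fun ω => (φ ω, m (X 0 ω, Y 0 ω)) with hAdef
  set B : Ω → ℂ := fun ω => m (X 1 ω, Y 1 ω) with hBdef
  set C : Ω → ℂ := fun ω => m (X 2 ω, Y 2 ω) with hCdef
  have hAm : Measurable A := hφm.prodMk (hm.comp ((hXm 0).prodMk (hYm 0)))
  have hBm : Measurable B := hm.comp ((hXm 1).prodMk (hYm 1))
  have hCm : Measurable C := hm.comp ((hXm 2).prodMk (hYm 2))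
  -- laws of B and C
  have hpair : ∀ i : Fin 3, IndepFun (X i) (Y i) P → P.map (fun ω => (X i ω, Y i ω))
      = (gaussianReal 0 (1/2)).prod (gaussianReal 0 (1/2)) := by
    intro i hi
    rw [(indepFun_iff_map_prod_eq_prod_map_map (hXm i).aemeasurable
      (hYm i).aemeasurable).mp hi, hXlaw i, hYlaw i]
  have hXY1 : IndepFun (X 1) (Y 1) P := by
    have := hindep.indepFun (show (3 : Fin 7) ≠ 4 by decide)
    simpa [hf] using this
  have hXY2 : IndepFun (X 2) (Y 2) P := by
    have := hindep.indepFun (show (5 : Fin 7) ≠ 6 by decide)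
    simpa [hf] using this
  have hB_law : P.map B = sosfGaussC := by
    rw [hBdef, show (fun ω => m (X 1 ω, Y 1 ω)) = m ∘ (fun ω => (X 1 ω, Y 1 ω)) from rfl,
      ← Measure.map_map hm ((hXm 1).prodMk (hYm 1)), hpair 1 hXY1, hmdef,
      sosf_gaussC_eq_map]
  have hC_law : P.map C = sosfGaussC := by
    rw [hCdef, show (fun ω => m (X 2 ω, Y 2 ω)) = m ∘ (fun ω => (X 2 ω, Y 2 ω)) from rfl,
      ← Measure.map_map hm ((hXm 2).prodMk (hYm 2)), hpair 2 hXY2, hmdef,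
      sosf_gaussC_eq_map]
  -- independence of the groups
  have hIndep_AB : IndepFun A B P := by
    have h := hindep.indepFun_finset {0, 1, 2} {3, 4} (by decide) hfm
    have h2 := h.comp
      (show Measurable (fun v : ({0, 1, 2} : Finset (Fin 7)) → ℝ =>
          (v ⟨0, by decide⟩, m (v ⟨1, by decide⟩, v ⟨2, by decide⟩))) from
        (measurable_pi_apply _).prodMk (hm.comp
          ((measurable_pi_apply _).prodMk (measurable_pi_apply _))))
      (show Measurable (fun v : ({3, 4} : Finset (Fin 7)) → ℝ =>
          m (v ⟨3, by decide⟩, v ⟨4, by decide⟩)) from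
        hm.comp ((measurable_pi_apply _).prodMk (measurable_pi_apply _)))
    exact h2
  have hIndep_AB_C : IndepFun (fun ω => (A ω, B ω)) C P := by
    have h := hindep.indepFun_finset {0, 1, 2, 3, 4} {5, 6} (by decide) hfm
    have h2 := h.comp
      (show Measurable (fun v : ({0, 1, 2, 3, 4} : Finset (Fin 7)) → ℝ =>
          ((v ⟨0, by decide⟩, m (v ⟨1, by decide⟩, v ⟨2, by decide⟩)),
            m (v ⟨3, by decide⟩, v ⟨4, by decide⟩))) from
        ((measurable_pi_apply _).prodMk (hm.comp
          ((measurable_pi_apply _).prodMk (measurable_pi_apply _)))).prodMk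
          (hm.comp ((measurable_pi_apply _).prodMk (measurable_pi_apply _))))
      (show Measurable (fun v : ({5, 6} : Finset (Fin 7)) → ℝ =>
          m (v ⟨5, by decide⟩, v ⟨6, by decide⟩)) from
        hm.comp ((measurable_pi_apply _).prodMk (measurable_pi_apply _)))
    exact h2
  -- the joint law
  set α : Measure (ℝ × ℂ) := P.map A with hαdef
  haveI : IsProbabilityMeasure α := Measure.isProbabilityMeasure_map hAm.aemeasurable
  haveI : IsProbabilityMeasure sosfGaussC := by
    rw [← hB_law]; exact Measure.isProbabilityMeasure_map hBm.aemeasurable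
  set M : Measure (ℂ × (ℝ × ℂ) × ℂ) := sosfGaussC.prod (α.prod sosfGaussC) with hMdef
  set V : Ω → ℂ × (ℝ × ℂ) × ℂ := fun ω => (C ω, A ω, B ω) with hVdef
  have hVm : Measurable V := hCm.prodMk (hAm.prodMk hBm)
  have hV_law : P.map V = M := by
    have s1 : P.map (fun ω => (C ω, A ω, B ω))
        = (P.map C).prod (P.map fun ω => (A ω, B ω)) :=
      (indepFun_iff_map_prod_eq_prod_map_map hCm.aemeasurable
        (hAm.prodMk hBm).aemeasurable).mp hIndep_AB_C.symm
    have s2 : P.map (fun ω => (A ω, B ω)) = (P.map A).prod (P.map B) :=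
      (indepFun_iff_map_prod_eq_prod_map_map hAm.aemeasurable hBm.aemeasurable).mp hIndep_AB
    rw [hVdef, hMdef, s1, s2, hB_law, hC_law, hαdef]
  -- the skew-product rotation
  set S : ℂ × (ℝ × ℂ) × ℂ → ℂ × (ℝ × ℂ) × ℂ := fun q => (q.1, q.2.1, q.2.2 * sosfU q.1)
    with hSdef
  have hSm : Measurable S :=
    measurable_fst.prodMk ((measurable_fst.comp measurable_snd).prodMk
      ((measurable_snd.comp measurable_snd).mul (sosfU_measurable.comp measurable_fst)))
  have hS_pres : MeasurePreserving S M M := by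
    rw [hMdef]
    exact (MeasurePreserving.id sosfGaussC).skew_product
      (g := fun c (p : (ℝ × ℂ) × ℂ) => (p.1, p.2 * sosfU c))
      ((measurable_fst.comp measurable_snd).prodMk
        ((measurable_snd.comp measurable_snd).mul (sosfU_measurable.comp measurable_fst)))
      (ae_of_all _ fun c => ((MeasurePreserving.id α).prod
        (⟨measurable_mul_const _, sosf_rot (sosfU_abs c)⟩ :
          MeasurePreserving (fun b : ℂ => b * sosfU c) sosfGaussC sosfGaussC)).map_eq)
  -- the two observable maps
  set F : ℂ × (ℝ × ℂ) × ℂ → ℝ := fun q => ‖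
    ((ω₀ : ℂ) * Complex.exp ((q.2.1.1 : ℂ) * Complex.I) + (ω₁ : ℂ) * q.2.1.2 +
      (ω₂ : ℂ) * (q.2.2 * q.1))‖ with hFdef
  set F' : ℂ × (ℝ × ℂ) × ℂ → ℝ := fun q => ‖
    ((ω₀ : ℂ) * Complex.exp ((q.2.1.1 : ℂ) * Complex.I) + (ω₁ : ℂ) * q.2.1.2 +
      (ω₂ : ℂ) * (q.2.2 * (‖q.1‖ : ℂ)))‖ with hF'def
  have hFm : Measurable F := by
    apply continuous_norm.measurable.comp
    fun_prop
  have hF'm : Measurable F' := by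
    apply continuous_norm.measurable.comp
    apply Measurable.add
    · fun_prop
    · apply Measurable.const_mul
      exact (measurable_snd.comp measurable_snd).mul
        ((Complex.measurable_ofReal.comp
          (continuous_norm.measurable.comp measurable_fst)))
  have hFS : F' = F ∘ S := by
    funext q
    simp only [hFdef, hF'def, hSdef, Function.comp]
    rw [sosfU_spec]
  have hL : (fun ω => ‖
      ((ω₀ : ℂ) * Complex.exp ((φ ω : ℂ) * Complex.I) + (ω₁ : ℂ) * G 0 ω +
        (ω₂ : ℂ) * (G 1 ω * G 2 ω))‖) = F ∘ V := by
    funext ω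
    simp only [Function.comp, hFdef, hVdef, hAdef, hBdef, hCdef, hmdef]
    rw [hG 0 ω, hG 1 ω, hG 2 ω]
  have hR : (fun ω => ‖
      ((ω₀ : ℂ) * Complex.exp ((φ ω : ℂ) * Complex.I) + (ω₁ : ℂ) * G 0 ω +
        (ω₂ : ℂ) * (G 1 ω * (‖G 2 ω‖ : ℂ)))‖) = F' ∘ V := by
    funext ω
    simp only [Function.comp, hF'def, hVdef, hAdef, hBdef, hCdef, hmdef]
    rw [hG 0 ω, hG 1 ω, hG 2 ω]
  rw [hL, hR, ← Measure.map_map hFm hVm, ← Measure.map_map hF'm hVm, hV_law, hFS,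
    ← Measure.map_map hFm hSm, hS_pres.map_eq]
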